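/- Let (X,d) be a complete metric space and f_1,…,f_N : X → X nonexpansive maps such that there exists a nonempty closed bounded set C with Φ(C) ⊆ C. Let (x_n)_{n≥0} and (y_n)_{n≥0} be two orbits starting at the same point y_0 = x_0, with disjunctive driving sequences (i_n)_{n≥1} and (j_n)_{n≥1}. Assume condition (CO): there exists a finite word (u_1,…,u_l) ∈ {1,…,N}^l such that the composition f_{u_l} ∘ … ∘ f_{u_1} restricted to the branching tree T = ⋃_{n=0}^∞ Φ^n({x_0}) = {f_{σ_k} ∘ … ∘ f_{σ_1}(x_0) : k ≥ 0, σ_1,…,σ_k ∈ {1,…,N}} is a Lipschitz contraction (Lipschitz with some constant L < 1 on T). Then the omega-limit sets coincide: ω((x_n)) = ω((y_n)). -/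

import Mathlib

/-- The omega-limit set of a sequence: the descending intersection of the
closures of the tails of the sequence. -/
def omegaLimitSet {X : Type*} [MetricSpace X] (x : ℕ → X) : Set X :=
  ⋂ m : ℕ, closure (x '' Set.Ici m)

/-- Apply the maps of the IFS along a word, the head of the list acting first:
`wordMap f [u₁, …, u_l] = f_{u_l} ∘ … ∘ f_{u_1}`. -/
def wordMap {X : Type*} {N : ℕ} (f : Fin N → X → X) : List (Fin N) → X → X
  | [], p => p
  | i :: w, p => wordMap f w (f i p)

/-- A sequence of symbols is disjunctive if it contains every finite word over
the alphabet as a consecutive subword. -/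
def Disjunctive {N : ℕ} (σ : ℕ → Fin N) : Prop :=
  ∀ (m : ℕ) (w : Fin m → Fin N), ∃ n₀ : ℕ, ∀ j : Fin m, σ (n₀ + (j : ℕ)) = w j

lemma wordMap_append {X : Type*} {N : ℕ} (f : Fin N → X → X) (w₁ w₂ : List (Fin N)) (p : X) :
    wordMap f (w₁ ++ w₂) p = wordMap f w₂ (wordMap f w₁ p) := by
  induction w₁ generalizing p with
  | nil => rfl
  | cons i w ih => simp [wordMap, ih]

lemma wordMap_dist {X : Type*} [MetricSpace X] {N : ℕ} {f : Fin N → X → X}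
    (hf : ∀ (i : Fin N) (a b : X), dist (f i a) (f i b) ≤ dist a b)
    (w : List (Fin N)) (a b : X) :
    dist (wordMap f w a) (wordMap f w b) ≤ dist a b := by
  induction w generalizing a b with
  | nil => exact le_rfl
  | cons i w ih => exact (ih _ _).trans (hf i a b)

lemma wordMap_join_replicate {X : Type*} {N : ℕ} (f : Fin N → X → X) (u : List (Fin N))
    (k : ℕ) (p : X) :
    wordMap f ((List.replicate k u).flatten) p = (wordMap f u)^[k] p := by
  induction k generalizing p with
  | zero => rfl
  | succ k ih =>
    rw [List.replicate_succ, List.flatten_cons, wordMap_append, ih,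
      Function.iterate_succ_apply]

/-- For a nonexpansive IFS on a complete metric space possessing a
nonempty closed bounded subinvariant set, two orbits starting at the same point,
driven by disjunctive sequences, have the same omega-limit set, provided
condition (CO) holds: some finite composition of the maps is a Lipschitz
contraction on the branching tree rooted at the common starting point. -/
theorem stmt_7 {X : Type*} [MetricSpace X] [CompleteSpace X] {N : ℕ}
    (f : Fin N → X → X)
    (hf : ∀ (i : Fin N) (a b : X), dist (f i a) (f i b) ≤ dist a b)
    (C : Set X) (hCne : C.Nonempty) (hCclosed : IsClosed C)
    (hCbdd : Bornology.IsBounded C) (hCsub : (⋃ i : Fin N, f i '' C) ⊆ C)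
    (x y : ℕ → X) (σ τ : ℕ → Fin N)
    (hx : ∀ n : ℕ, x (n + 1) = f (σ n) (x n))
    (hy : ∀ n : ℕ, y (n + 1) = f (τ n) (y n))
    (hstart : y 0 = x 0)
    (hσ : Disjunctive σ) (hτ : Disjunctive τ)
    (hcontr : ∃ (u : List (Fin N)) (L : ℝ), u ≠ [] ∧ 0 ≤ L ∧ L < 1 ∧
      ∀ s ∈ {p : X | ∃ w : List (Fin N), wordMap f w (x 0) = p},
      ∀ t ∈ {p : X | ∃ w : List (Fin N), wordMap f w (x 0) = p},
        dist (wordMap f u s) (wordMap f u t) ≤ L * dist s t) :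
    omegaLimitSet x = omegaLimitSet y := by
  classical
  obtain ⟨u, L, hune, hL0, hL1, hcon⟩ := hcontr
  set T : Set X := {p : X | ∃ w : List (Fin N), wordMap f w (x 0) = p} with hTdef
  set g : X → X := wordMap f u with hgdef
  obtain ⟨c, hc⟩ := hCne
  -- orbit formula
  have horb : ∀ (z : ℕ → X) (ρ : ℕ → Fin N), (∀ n, z (n + 1) = f (ρ n) (z n)) →
      ∀ (q r : ℕ), z (r + q) = wordMap f (List.ofFn fun j : Fin q => ρ (r + (j : ℕ))) (z r) := by
    intro z ρ hz q
    induction q with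
    | zero => intro r; simp [wordMap]
    | succ q ih =>
      intro r
      have h1 : (List.ofFn fun j : Fin (q + 1) => ρ (r + (j : ℕ))) =
          ρ r :: List.ofFn fun j : Fin q => ρ ((r + 1) + (j : ℕ)) := by
        rw [List.ofFn_succ]
        exact congrArg₂ List.cons (by simp) (congrArg List.ofFn (funext fun j => by
          simp only [Fin.val_succ]; congr 1; omega))
      rw [h1]
      show z (r + (q + 1)) = wordMap f _ (f (ρ r) (z r))
      rw [← hz r, show r + (q + 1) = (r + 1) + q by omega, ih (r + 1)]
  -- occurrence lemma
  have hocc : ∀ (ρ : ℕ → Fin N), Disjunctive ρ → ∀ (m : ℕ) (v : List (Fin N)),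
      ∃ r, m ≤ r ∧ (List.ofFn fun j : Fin v.length => ρ (r + (j : ℕ))) = v := by
    intro ρ hρ m v
    obtain ⟨n₀, hn₀⟩ := hρ (m + v.length)
      (fun j => if h : (j : ℕ) < m then σ 0 else v.get ⟨(j : ℕ) - m, by omega⟩)
    refine ⟨n₀ + m, Nat.le_add_left m n₀, ?_⟩
    apply List.ext_getElem (by simp)
    intro i h1 h2
    have hlt : m + i < m + v.length := by
      simp at h1; omega
    have h3 := hn₀ ⟨m + i, hlt⟩
    simp only at h3
    rw [dif_neg (by omega)] at h3
    simp only [List.getElem_ofFn]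
    rw [show n₀ + m + i = n₀ + (m + i) by omega]
    rw [h3]
    have hix : m + i - m = i := by omega
    simp only [List.get_eq_getElem]
    congr 1
  -- tree facts
  have hx0T : x 0 ∈ T := ⟨[], rfl⟩
  have hwT : ∀ (t : X), t ∈ T → ∀ w : List (Fin N), wordMap f w t ∈ T := by
    rintro t ⟨w', rfl⟩ w
    exact ⟨w' ++ w, (wordMap_append f w' w (x 0))⟩
  have hgT : ∀ t ∈ T, g t ∈ T := fun t ht => hwT t ht u
  -- C invariance under words
  have hCw : ∀ (w : List (Fin N)) (c' : X), c' ∈ C → wordMap f w c' ∈ C := by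
    intro w
    induction w with
    | nil => intro c' hc'; exact hc'
    | cons i w ih =>
      intro c' hc'
      exact ih _ (hCsub (Set.mem_iUnion.mpr ⟨i, Set.mem_image_of_mem _ hc'⟩))
  -- boundedness of the tree
  set B : ℝ := 2 * (dist (x 0) c + Metric.diam C + dist c (x 0)) with hBdef
  have hB0 : (0 : ℝ) ≤ B := by
    have := Metric.diam_nonneg (s := C)
    have := dist_nonneg (x := x 0) (y := c)
    have := dist_nonneg (x := c) (y := x 0)
    positivity
  have hbase : ∀ t ∈ T, dist t (x 0) ≤ dist (x 0) c + Metric.diam C + dist c (x 0) := by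
    rintro t ⟨w, rfl⟩
    calc dist (wordMap f w (x 0)) (x 0)
        ≤ dist (wordMap f w (x 0)) (wordMap f w c) + dist (wordMap f w c) c + dist c (x 0) :=
          dist_triangle4 _ _ _ _
      _ ≤ dist (x 0) c + Metric.diam C + dist c (x 0) := by
          gcongr
          · exact wordMap_dist hf w _ _
          · exact Metric.dist_le_diam_of_mem hCbdd (hCw w c hc) hc
  have hpair : ∀ s ∈ T, ∀ t ∈ T, dist s t ≤ B := by
    intro s hs t ht
    calc dist s t ≤ dist s (x 0) + dist t (x 0) := dist_triangle_right _ _ _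
      _ ≤ B := by rw [hBdef]; linarith [hbase s hs, hbase t ht]
  -- iterated contraction
  have hcontract : ∀ (k : ℕ), ∀ s ∈ T, ∀ t ∈ T,
      dist (g^[k] s) (g^[k] t) ≤ L ^ k * dist s t := by
    intro k
    induction k with
    | zero => intro s _ t _; simp
    | succ k ih =>
      intro s hs t ht
      rw [Function.iterate_succ_apply, Function.iterate_succ_apply]
      calc dist (g^[k] (g s)) (g^[k] (g t)) ≤ L ^ k * dist (g s) (g t) :=
            ih _ (hgT s hs) _ (hgT t ht)
        _ ≤ L ^ k * (L * dist s t) := by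
            have := hcon s hs t ht
            exact mul_le_mul_of_nonneg_left this (pow_nonneg hL0 k)
        _ = L ^ (k + 1) * dist s t := by ring
  -- the limit point pstar
  have haT : ∀ j : ℕ, g^[j] (x 0) ∈ T := by
    intro j
    induction j with
    | zero => exact hx0T
    | succ j ih => rw [Function.iterate_succ_apply']; exact hgT _ ih
  have hcauchy : CauchySeq (fun j => g^[j] (x 0)) := by
    apply cauchySeq_of_le_geometric L (dist (x 0) (g (x 0))) hL1
    intro n
    rw [Function.iterate_succ_apply]
    calc dist (g^[n] (x 0)) (g^[n] (g (x 0))) ≤ L ^ n * dist (x 0) (g (x 0)) :=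
          hcontract n _ hx0T _ (hgT _ hx0T)
      _ = dist (x 0) (g (x 0)) * L ^ n := by ring
  obtain ⟨pstar, hpstar⟩ := cauchySeq_tendsto_of_complete hcauchy
  have hdistp : ∀ (k : ℕ), ∀ t ∈ T, dist (g^[k] t) pstar ≤ L ^ k * B := by
    intro k t ht
    have h1 : Filter.Tendsto (fun j => dist (g^[k] t) (g^[k + j] (x 0))) Filter.atTop
        (nhds (dist (g^[k] t) pstar)) := by
      apply Filter.Tendsto.dist tendsto_const_nhds
      have := hpstar.comp (Filter.tendsto_add_atTop_nat k)
      simpa [Function.comp_def, Nat.add_comm] using this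
    apply le_of_tendsto h1
    filter_upwards with j
    rw [Function.iterate_add_apply]
    calc dist (g^[k] t) (g^[k] (g^[j] (x 0))) ≤ L ^ k * dist t (g^[j] (x 0)) :=
          hcontract k _ ht _ (haT j)
      _ ≤ L ^ k * B := mul_le_mul_of_nonneg_left (hpair t ht _ (haT j)) (pow_nonneg hL0 k)
  have hexk : ∀ ε : ℝ, 0 < ε → ∃ k : ℕ, L ^ k * B < ε := by
    intro ε hε
    have h := (tendsto_pow_atTop_nhds_zero_of_lt_one hL0 hL1).mul_const B
    rw [zero_mul] at h
    exact (h.eventually (gt_mem_nhds hε)).exists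
  -- main claim for a single orbit
  have key : ∀ (z : ℕ → X) (ρ : ℕ → Fin N), (∀ n, z (n + 1) = f (ρ n) (z n)) → z 0 = x 0 →
      Disjunctive ρ →
      omegaLimitSet z = closure {p : X | ∃ w : List (Fin N), wordMap f w pstar = p} := by
    intro z ρ hz hz0 hρ
    have hzT : ∀ n, z n ∈ T := by
      intro n
      have h := horb z ρ hz n 0
      rw [Nat.zero_add, hz0] at h
      exact ⟨_, h.symm⟩
    apply Set.Subset.antisymm
    · -- ω z ⊆ closure A
      intro p hp
      rw [Metric.mem_closure_iff]
      intro ε hε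
      obtain ⟨k, hk⟩ := hexk (ε / 2) (by positivity)
      obtain ⟨r, hr, hvocc⟩ := hocc ρ hρ 0 ((List.replicate k u).flatten)
      set n₁ : ℕ := r + ((List.replicate k u).flatten).length with hn₁def
      have hz₁ : z n₁ = g^[k] (z r) := by
        rw [hn₁def, horb z ρ hz _ r, hvocc, wordMap_join_replicate]
      have hmem := Set.mem_iInter.mp hp n₁
      rw [Metric.mem_closure_iff] at hmem
      obtain ⟨b, hb, hdb⟩ := hmem (ε / 2) (by positivity)
      obtain ⟨n, hn, rfl⟩ := hb
      rw [Set.mem_Ici] at hn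
      have hn' : z n = wordMap f (List.ofFn fun j : Fin (n - n₁) => ρ (n₁ + (j : ℕ))) (z n₁) := by
        have h := horb z ρ hz (n - n₁) n₁
        rw [show n₁ + (n - n₁) = n by omega] at h
        exact h
      refine ⟨wordMap f (List.ofFn fun j : Fin (n - n₁) => ρ (n₁ + (j : ℕ))) pstar,
        ⟨_, rfl⟩, ?_⟩
      have hd2 : dist (z n) (wordMap f (List.ofFn fun j : Fin (n - n₁) => ρ (n₁ + (j : ℕ))) pstar)
          ≤ L ^ k * B := by
        rw [hn']
        calc dist _ _ ≤ dist (z n₁) pstar := wordMap_dist hf _ _ _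
          _ ≤ L ^ k * B := by rw [hz₁]; exact hdistp k _ (hzT r)
      calc dist p _ ≤ dist p (z n) + dist (z n) _ := dist_triangle _ _ _
        _ < ε / 2 + ε / 2 := by
            apply add_lt_add_of_lt_of_le hdb (hd2.trans hk.le) |>.trans_le le_rfl
        _ = ε := by ring
    · -- closure A ⊆ ω z
      apply closure_minimal ?_ (isClosed_iInter fun m => isClosed_closure)
      rintro p ⟨w, rfl⟩
      apply Set.mem_iInter.mpr
      intro m
      rw [Metric.mem_closure_iff]
      intro ε hε
      obtain ⟨k, hk⟩ := hexk ε hε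
      obtain ⟨r, hrm, hocc'⟩ := hocc ρ hρ m ((List.replicate k u).flatten ++ w)
      set v : List (Fin N) := (List.replicate k u).flatten ++ w with hvdef
      have hzv : z (r + v.length) = wordMap f v (z r) := by
        rw [horb z ρ hz v.length r, hocc']
      refine ⟨z (r + v.length), ⟨r + v.length, by
        simp only [Set.mem_Ici]; omega, rfl⟩, ?_⟩
      rw [hzv, hvdef, wordMap_append, wordMap_join_replicate]
      calc dist (wordMap f w pstar) (wordMap f w (g^[k] (z r)))
          ≤ dist pstar (g^[k] (z r)) := wordMap_dist hf _ _ _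
        _ = dist (g^[k] (z r)) pstar := dist_comm _ _
        _ ≤ L ^ k * B := hdistp k _ (hzT r)
        _ < ε := hk
  rw [key x σ hx rfl hσ, key y τ hy hstart hτ]
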